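/- Let F be the CDF of the χ²₁ distribution. For every fixed x > 0, lim_{d→∞} d · log(1 − F(x/d²)) = −√(2x/π). -/

import Mathlib

open MeasureTheory ProbabilityTheory Filter Real

/-- The chi-square distribution with one degree of freedom. -/
noncomputable def chiSqOne : Measure ℝ :=
  Measure.map (fun z : ℝ => z ^ 2) (gaussianReal 0 1)

/-- The CDF of `χ²₁`. -/
noncomputable def chiSqOneCDF (t : ℝ) : ℝ := (chiSqOne (Set.Iic t)).toReal

lemma phi_cont : Continuous (gaussianPDFReal 0 1) := by
  rw [gaussianPDFReal_def]
  fun_prop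

lemma phi_integrable (a b : ℝ) : IntervalIntegrable (gaussianPDFReal 0 1) volume a b :=
  phi_cont.intervalIntegrable a b

lemma cdf_eq {t : ℝ} (ht : 0 ≤ t) :
    chiSqOneCDF t = ∫ z in (-Real.sqrt t)..(Real.sqrt t), gaussianPDFReal 0 1 z := by
  have hmeas : Measurable (fun z : ℝ => z ^ 2) := by fun_prop
  have hpre : (fun z : ℝ => z ^ 2) ⁻¹' Set.Iic t = Set.Icc (-Real.sqrt t) (Real.sqrt t) := by
    ext z
    simp only [Set.mem_preimage, Set.mem_Iic, Set.mem_Icc, ← abs_le]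
    rw [← Real.sqrt_sq_eq_abs]
    constructor
    · exact fun h => Real.sqrt_le_sqrt h
    · intro h
      have h2 := Real.sqrt_le_sqrt (le_of_eq (Real.sq_sqrt ht).symm)
      calc z ^ 2 = Real.sqrt (z ^ 2) ^ 2 := by rw [Real.sq_sqrt (sq_nonneg z)]
        _ ≤ Real.sqrt t ^ 2 := by
            apply pow_le_pow_left₀ (Real.sqrt_nonneg _) h
        _ = t := Real.sq_sqrt ht
  rw [chiSqOneCDF, chiSqOne, Measure.map_apply hmeas measurableSet_Iic, hpre,
    gaussianReal_apply_eq_integral 0 one_ne_zero, ENNReal.toReal_ofReal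
      (setIntegral_nonneg measurableSet_Icc fun z _ => gaussianPDFReal_nonneg 0 1 z),
    MeasureTheory.integral_Icc_eq_integral_Ioc,
    intervalIntegral.integral_of_le (neg_le_self (Real.sqrt_nonneg t))]

/-- For every fixed `x > 0`, `d · log(1 − F(x/d²)) → −√(2x/π)` as `d → ∞`, where `F` is the
`χ²₁` CDF. -/
theorem stmt6 (x : ℝ) (hx : 0 < x) :
    Tendsto (fun d : ℕ => (d : ℝ) * Real.log (1 - chiSqOneCDF (x / (d : ℝ) ^ 2)))
      atTop (nhds (-Real.sqrt (2 * x / π))) := by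
  set φ := gaussianPDFReal 0 1 with hφ
  set H : ℝ → ℝ := fun s => ∫ z in (-s)..s, φ z with hH
  have hsqx : (0:ℝ) < Real.sqrt x := Real.sqrt_pos.mpr hx
  -- H has derivative 2 φ 0 at 0
  have hI : ∀ u : ℝ, HasDerivAt (fun s : ℝ => ∫ z in (0:ℝ)..s, φ z) (φ u) u := by
    intro u
    exact intervalIntegral.integral_hasDerivAt_right (phi_integrable 0 u)
      (phi_cont.stronglyMeasurable.stronglyMeasurableAtFilter) phi_cont.continuousAt
  have hHeq : ∀ s : ℝ, (∫ z in (0:ℝ)..s, φ z) - (∫ z in (0:ℝ)..(-s), φ z) = H s := by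
    intro s
    rw [intervalIntegral.integral_interval_sub_left (phi_integrable 0 s) (phi_integrable 0 (-s))]
  have hHd : HasDerivAt H (2 * φ 0) 0 := by
    have h2 : HasDerivAt (fun s : ℝ => ∫ z in (0:ℝ)..(-s), φ z) (-φ 0) 0 := by
      have hI0 : HasDerivAt (fun u : ℝ => ∫ z in (0:ℝ)..u, φ z) (φ 0) (-0) := by
        rw [neg_zero]; exact hI 0
      have := hI0.comp (0:ℝ) (hasDerivAt_neg 0)
      simpa [Function.comp_def] using this
    have h3 := (hI 0).sub h2
    have h3' : HasDerivAt H (φ 0 - -φ 0) 0 :=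
      h3.congr_of_eventuallyEq (Eventually.of_forall fun s => (hHeq s).symm)
    have : φ 0 - -φ 0 = 2 * φ 0 := by ring
    rwa [this] at h3'
  have hH0 : H 0 = 0 := by simp [hH]
  -- slope of H at 0
  have hslope : Tendsto (fun s : ℝ => H s / s) (nhdsWithin 0 {0}ᶜ) (nhds (2 * φ 0)) := by
    have h := hasDerivAt_iff_tendsto_slope.mp hHd
    refine h.congr' ?_
    filter_upwards with s
    simp [slope_def_field, hH0]
  -- the sequence s_d = √x / d
  set s : ℕ → ℝ := fun d => Real.sqrt x / d with hs
  have hs_pos : ∀ d : ℕ, 0 < d → 0 < s d := fun d hd => div_pos hsqx (by positivity)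
  have hs_tendsto : Tendsto s atTop (nhdsWithin 0 {0}ᶜ) := by
    apply tendsto_nhdsWithin_of_tendsto_nhds_of_eventually_within
    · exact tendsto_const_div_atTop_nhds_zero_nat _
    · filter_upwards [eventually_gt_atTop 0] with d hd
      exact ne_of_gt (hs_pos d hd)
  -- F d = H (s d) for d > 0
  have hF : ∀ d : ℕ, 0 < d → chiSqOneCDF (x / (d : ℝ) ^ 2) = H (s d) := by
    intro d hd
    have hd' : (0:ℝ) < d := by positivity
    have ht : 0 ≤ x / (d : ℝ) ^ 2 := by positivity
    have hσ : Real.sqrt (x / (d : ℝ) ^ 2) = s d := by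
      rw [Real.sqrt_div hx.le, Real.sqrt_sq hd'.le]
    rw [cdf_eq ht, hσ]
  -- d * F d → √x * (2 φ 0)
  have hdF : Tendsto (fun d : ℕ => (d : ℝ) * chiSqOneCDF (x / (d : ℝ) ^ 2)) atTop
      (nhds (Real.sqrt x * (2 * φ 0))) := by
    have h1 : Tendsto (fun d : ℕ => Real.sqrt x * (H (s d) / s d)) atTop
        (nhds (Real.sqrt x * (2 * φ 0))) :=
      (hslope.comp hs_tendsto).const_mul _
    refine h1.congr' ?_
    filter_upwards [eventually_gt_atTop 0] with d hd
    have hd' : (0:ℝ) < d := by positivity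
    rw [hF d hd]
    field_simp [hs]
    have hsx := hsqx.ne'
    simp only [hs]
    field_simp
  -- identify the limit value
  have hφ0 : φ 0 = (Real.sqrt (2 * π))⁻¹ := by
    simp [hφ, gaussianPDFReal]
  have hval : Real.sqrt x * (2 * φ 0) = Real.sqrt (2 * x / π) := by
    have h4 : Real.sqrt 4 = 2 := by
      rw [show (4:ℝ) = 2 ^ 2 by norm_num, Real.sqrt_sq (by norm_num : (0:ℝ) ≤ 2)]
    rw [hφ0]
    calc Real.sqrt x * (2 * (Real.sqrt (2 * π))⁻¹)
        = Real.sqrt x * (Real.sqrt 4 / Real.sqrt (2 * π)) := by rw [h4]; ring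
      _ = Real.sqrt x * Real.sqrt (4 / (2 * π)) := by rw [Real.sqrt_div (by norm_num)]
      _ = Real.sqrt (x * (4 / (2 * π))) := (Real.sqrt_mul hx.le _).symm
      _ = Real.sqrt (2 * x / π) := by
          congr 1
          field_simp
          ring
  rw [hval] at hdF
  -- F d → 0
  have hF0 : Tendsto (fun d : ℕ => chiSqOneCDF (x / (d : ℝ) ^ 2)) atTop (nhds 0) := by
    have h1 : Tendsto (fun d : ℕ => ((d : ℝ) * chiSqOneCDF (x / (d : ℝ) ^ 2)) * (d : ℝ)⁻¹)
        atTop (nhds (Real.sqrt (2 * x / π) * 0)) :=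
      hdF.mul (tendsto_inv_atTop_zero.comp tendsto_natCast_atTop_atTop)
    rw [mul_zero] at h1
    refine h1.congr' ?_
    filter_upwards [eventually_gt_atTop 0] with d hd
    have hd' : ((d:ℝ)) ≠ 0 := by positivity
    field_simp
  -- F d > 0 eventually
  have hFpos : ∀ d : ℕ, 0 < d → 0 < chiSqOneCDF (x / (d : ℝ) ^ 2) := by
    intro d hd
    rw [hF d hd]
    exact intervalIntegral.intervalIntegral_pos_of_pos (phi_integrable _ _)
      (fun z => gaussianPDFReal_pos 0 1 z one_ne_zero)
      (by linarith [hs_pos d hd])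
  have hF0' : Tendsto (fun d : ℕ => chiSqOneCDF (x / (d : ℝ) ^ 2)) atTop
      (nhdsWithin 0 {0}ᶜ) := by
    apply tendsto_nhdsWithin_of_tendsto_nhds_of_eventually_within _ hF0
    filter_upwards [eventually_gt_atTop 0] with d hd
    exact ne_of_gt (hFpos d hd)
  -- log(1 - y)/y → -1
  have hlog : HasDerivAt (fun y : ℝ => Real.log (1 - y)) (-1) 0 := by
    have h1 : HasDerivAt (fun y : ℝ => 1 - y) (-1) 0 := (hasDerivAt_id (0:ℝ)).const_sub 1
    have h2 := (Real.hasDerivAt_log (by norm_num : (1:ℝ) - 0 ≠ 0)).comp 0 h1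
    simpa [Function.comp_def] using h2
  have hlogslope : Tendsto (fun y : ℝ => Real.log (1 - y) / y) (nhdsWithin 0 {0}ᶜ)
      (nhds (-1)) := by
    have h := hasDerivAt_iff_tendsto_slope.mp hlog
    refine h.congr' ?_
    filter_upwards with y
    simp [slope_def_field]
  have hratio : Tendsto (fun d : ℕ =>
      Real.log (1 - chiSqOneCDF (x / (d : ℝ) ^ 2)) / chiSqOneCDF (x / (d : ℝ) ^ 2)) atTop
      (nhds (-1)) := hlogslope.comp hF0'
  -- combine
  have hfinal := hdF.mul hratio
  rw [mul_neg_one] at hfinal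
  refine hfinal.congr' ?_
  filter_upwards [eventually_gt_atTop 0] with d hd
  have hne := (hFpos d hd).ne'
  field_simp
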